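/- Take J = [r]×[r] and L = {u′,u″ : u ∈ U}. Let F be the full Fock space over I = [r]×[r]×L with vacuum state φ, and define g(p,q,u) = √(b_{p,q}(u))·ℓ((p,q,u′)) + √(b_{q,p}(u))·ℓ((q,p,u″))*. On the Hilbert direct sum F^{⊕r}, let G_{p,q}(u) be the bounded operator sending (ξ₁,…,ξ_r) to the tuple having g(p,q,u)ξ_q in position p and 0 elsewhere, and let Φ_k(x) = ⟨x δ^{(k)}, δ^{(k)}⟩, where δ^{(k)} ∈ F^{⊕r} has δ_Ω in position k and 0 elsewhere. Then for every k ∈ [r], every m ≥ 1, all p₁,q₁,…,p_m,q_m ∈ [r], u₁,…,u_m ∈ U and ε₁,…,ε_m ∈ {1,*}: Ψ_k(ζ_{p₁,q₁}(u₁)^{ε₁} ⋯ ζ_{p_m,q_m}(u_m)^{ε_m}) = Φ_k(G_{p₁,q₁}(u₁)^{ε₁} ⋯ G_{p_m,q_m}(u_m)^{ε_m}), where x^1 = x and x^* is the adjoint. -/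

import Mathlib

noncomputable section

/-- A letter of a word in the matricially free Fock space of tracial type. -/
abbrev MLetter (r : ℕ) (L : Type*) := (Fin r × Fin r) × L

/-- A finite nonempty chained word with letters in `J × L`. -/
structure MWord (r : ℕ) (J : Set (Fin r × Fin r)) (L : Type*) where
  head : MLetter r L
  tail : List (MLetter r L)
  headJ : head.1 ∈ J
  tailJ : ∀ x ∈ tail, x.1 ∈ J
  chain : List.Chain' (fun a b : MLetter r L => a.1.2 = b.1.1) (head :: tail)

/-- Canonical orthonormal basis index set: vacua `Ω₁,…,Ω_r` and the words. -/
abbrev MBasis (r : ℕ) (J : Set (Fin r × Fin r)) (L : Type*) := (Fin r) ⊕ (MWord r J L)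

/-- The matricially free Fock space of tracial type, `ℓ²` of the basis set. -/
abbrev MSpace (r : ℕ) (J : Set (Fin r × Fin r)) (L : Type*) :=
  lp (fun _ : MBasis r J L => ℂ) 2

/-- Canonical basis vector. -/
def mvec {r : ℕ} {J : Set (Fin r × Fin r)} {L : Type*} (i : MBasis r J L) : MSpace r J L := by
  classical exact lp.single 2 i 1

/-- The vacuum vector `Ω_q`. -/
def vac {r : ℕ} {J : Set (Fin r × Fin r)} {L : Type*} (q : Fin r) : MSpace r J L :=
  mvec (Sum.inl q)

/-- Basis vector of a word. -/
def wvec {r : ℕ} {J : Set (Fin r × Fin r)} {L : Type*} (w : MWord r J L) : MSpace r J L :=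
  mvec (Sum.inr w)

/-- The single-letter word. -/
def MWord.single {r : ℕ} {J : Set (Fin r × Fin r)} {L : Type*}
    (x : MLetter r L) (hx : x.1 ∈ J) : MWord r J L :=
  ⟨x, [], hx, (by intro y hy; cases hy), List.isChain_singleton _⟩

/-- Prepending a letter to a word. -/
def MWord.cons {r : ℕ} {J : Set (Fin r × Fin r)} {L : Type*}
    (x : MLetter r L) (hx : x.1 ∈ J) (w : MWord r J L)
    (hc : x.1.2 = w.head.1.1) : MWord r J L :=
  ⟨x, w.head :: w.tail, hx, by
      intro y hy
      rcases List.mem_cons.mp hy with h | h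
      · exact h ▸ w.headJ
      · exact w.tailJ y h,
    List.isChain_cons_cons.mpr ⟨hc, w.chain⟩⟩

/-- `T` is the matricially free creation operator `℘_{p,q}(l)` with covariance `b`:
it maps `Ω_q` to `√b·((p,q,l))`, each word starting with first index `q` to `√b` times the
word with `((p,q),l)` prepended, and all other canonical basis vectors to `0`. -/
def IsMFCreation {r : ℕ} {J : Set (Fin r × Fin r)} {L : Type*}
    (b : ℝ) (p q : Fin r) (l : L) (hpq : ((p, q) : Fin r × Fin r) ∈ J)
    (T : MSpace r J L →L[ℂ] MSpace r J L) : Prop :=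
  T (vac q) = (Real.sqrt b : ℂ) • wvec (MWord.single ((p, q), l) hpq) ∧
  (∀ q' : Fin r, q' ≠ q → T (vac q') = 0) ∧
  (∀ (w : MWord r J L) (h : w.head.1.1 = q),
      T (wvec w) = (Real.sqrt b : ℂ) • wvec (MWord.cons ((p, q), l) hpq w h.symm)) ∧
  (∀ w : MWord r J L, w.head.1.1 ≠ q → T (wvec w) = 0)

/-- The vector state `Ψ_q(a) = ⟨aΩ_q, Ω_q⟩`. -/
def PsiM {r : ℕ} {J : Set (Fin r × Fin r)} {L : Type*} (q : Fin r)
    (a : MSpace r J L →L[ℂ] MSpace r J L) : ℂ :=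
  @inner ℂ _ _ (vac q : MSpace r J L) (a (vac q))

end
noncomputable section

/-- Basis index set of the full Fock space over `I`: the vacuum and the nonempty words. -/
abbrev FBasis (I : Type*) := Unit ⊕ {w : List I // w ≠ []}

/-- The full Fock space over `I`, `ℓ²` of its canonical basis set. -/
abbrev FSpace (I : Type*) := lp (fun _ : FBasis I => ℂ) 2

/-- Canonical basis vector of the full Fock space. -/
def fvec {I : Type*} (i : FBasis I) : FSpace I := by
  classical exact lp.single 2 i 1

/-- The vacuum vector `δ_Ω`. -/
def fvac {I : Type*} : FSpace I := fvec (Sum.inl ())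

/-- The basis vector `δ_w` of a nonempty word `w`. -/
def fword {I : Type*} (w : List I) (hw : w ≠ []) : FSpace I := fvec (Sum.inr ⟨w, hw⟩)

/-- `T` is the free creation operator `ℓ(i)`: it sends `δ_Ω` to `δ_{(i)}` and each
word basis vector `δ_w` to `δ_{i·w}`. -/
def IsFreeCreation {I : Type*} (i : I) (T : FSpace I →L[ℂ] FSpace I) : Prop :=
  T fvac = fword [i] (by simp) ∧
  ∀ (w : List I) (hw : w ≠ []), T (fword w hw) = fword (i :: w) (by simp)

/-- The vacuum state `φ(a) = ⟨aδ_Ω, δ_Ω⟩` on the full Fock space. -/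
def fockState {I : Type*} (a : FSpace I →L[ℂ] FSpace I) : ℂ :=
  @inner ℂ _ _ (fvac : FSpace I) (a fvac)

/-- The Hilbert direct sum `F^{⊕r}` of `r` copies of the full Fock space. -/
abbrev FockR (r : ℕ) (I : Type*) := PiLp 2 (fun _ : Fin r => FSpace I)

instance pilp_completeSpace {ι : Type*} [Fintype ι] {E : ι → Type*}
    [∀ i, NormedAddCommGroup (E i)] [∀ i, CompleteSpace (E i)] :
    CompleteSpace (PiLp 2 E) :=
  inferInstance

/-- Tuple constructor for `F^{⊕r}`. -/
def tupOf {r : ℕ} {I : Type*} (f : Fin r → FSpace I) : FockR r I :=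
  (WithLp.equiv 2 (∀ _ : Fin r, FSpace I)).symm f

/-- Component of an element of `F^{⊕r}`. -/
def tupComp {r : ℕ} {I : Type*} (ξ : FockR r I) (k : Fin r) : FSpace I :=
  (WithLp.equiv 2 (∀ _ : Fin r, FSpace I)) ξ k

/-- `δ^{(q)}`, the tuple with `δ_Ω` in position `q` and `0` elsewhere. -/
def fockDelta {r : ℕ} {I : Type*} (q : Fin r) : FockR r I :=
  tupOf (fun k => if k = q then fvac else 0)

/-- The state `Φ_k(x) = ⟨x δ^{(k)}, δ^{(k)}⟩` on the bounded operators on `F^{⊕r}`. -/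
def PhiR {r : ℕ} {I : Type*} (k : Fin r) (x : FockR r I →L[ℂ] FockR r I) : ℂ :=
  @inner ℂ _ _ (fockDelta k : FockR r I) (x (fockDelta k))

end
/-- `x^ε` for `ε ∈ {1, *}`: `x^1 = x` (encoded `true`) and `x^* = adjoint x` (encoded `false`). -/
noncomputable def sOp {H : Type*} [NormedAddCommGroup H] [InnerProductSpace ℂ H]
    [CompleteSpace H] (ε : Bool) (x : H →L[ℂ] H) : H →L[ℂ] H :=
  if ε then x else ContinuousLinearMap.adjoint x

set_option synthInstance.maxHeartbeats 1000000
set_option maxHeartbeats 1000000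

noncomputable section AuxProof

open ContinuousLinearMap

local notation "⟪" x ", " y "⟫" => @inner ℂ _ _ x y

namespace MRC

variable {α : Type*}

lemma single_inner [DecidableEq α] (j : α) (x : lp (fun _ : α => ℂ) 2) :
    ⟪lp.single 2 j (1:ℂ), x⟫ = x j := by
  rw [lp.inner_single_left]
  simp [RCLike.inner_apply]

lemma adjoint_coord [DecidableEq α]
    (T : lp (fun _ : α => ℂ) 2 →L[ℂ] lp (fun _ : α => ℂ) 2)
    (x : lp (fun _ : α => ℂ) 2) (j : α) :
    (ContinuousLinearMap.adjoint T x) j = ⟪T (lp.single 2 j (1:ℂ)), x⟫ := by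
  rw [← single_inner j (ContinuousLinearMap.adjoint T x),
    ContinuousLinearMap.adjoint_inner_right]

lemma apply_coord [DecidableEq α]
    (T : lp (fun _ : α => ℂ) 2 →L[ℂ] lp (fun _ : α => ℂ) 2)
    (x : lp (fun _ : α => ℂ) 2) (j : α) :
    (T x) j = ⟪ContinuousLinearMap.adjoint T (lp.single 2 j (1:ℂ)), x⟫ := by
  rw [ContinuousLinearMap.adjoint_inner_left, single_inner]

section Mside

variable {r : ℕ} {J : Set (Fin r × Fin r)} {L : Type*}

open Classical in
lemma mvec_apply (i j : MBasis r J L) : (mvec i) j = if j = i then 1 else 0 := by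
  classical
  simp only [mvec]
  by_cases h : j = i
  · subst h; rw [lp.single_apply_self, if_pos rfl]
  · rw [lp.single_apply_ne _ _ _ h, if_neg h]

lemma mvec_inner (j : MBasis r J L) (x : MSpace r J L) : ⟪mvec j, x⟫ = x j := by
  classical
  simp only [mvec]
  exact single_inner j x

lemma madj_coord (T : MSpace r J L →L[ℂ] MSpace r J L) (x : MSpace r J L) (j : MBasis r J L) :
    (ContinuousLinearMap.adjoint T x) j = ⟪T (mvec j), x⟫ := by
  classical
  simp only [mvec]
  exact adjoint_coord T x j

lemma mapp_coord (T : MSpace r J L →L[ℂ] MSpace r J L) (x : MSpace r J L) (j : MBasis r J L) :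
    (T x) j = ⟪ContinuousLinearMap.adjoint T (mvec j), x⟫ := by
  classical
  simp only [mvec]
  exact apply_coord T x j

theorem MWord.ext' {w₁ w₂ : MWord r J L} (h1 : w₁.head = w₂.head)
    (h2 : w₁.tail = w₂.tail) : w₁ = w₂ := by
  cases w₁; cases w₂; dsimp at h1 h2; subst h1; subst h2; rfl

theorem MWord.eq_iff {w₁ w₂ : MWord r J L} :
    w₁ = w₂ ↔ w₁.head = w₂.head ∧ w₁.tail = w₂.tail :=
  ⟨fun h => by subst h; exact ⟨rfl, rfl⟩, fun h => MWord.ext' h.1 h.2⟩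

end Mside

section Fside

variable {I : Type*}

open Classical in
lemma fvec_apply (i j : FBasis I) : (fvec i) j = if j = i then 1 else 0 := by
  classical
  simp only [fvec]
  by_cases h : j = i
  · subst h; rw [lp.single_apply_self, if_pos rfl]
  · rw [lp.single_apply_ne _ _ _ h, if_neg h]

lemma fvec_inner (j : FBasis I) (x : FSpace I) : ⟪fvec j, x⟫ = x j := by
  classical
  simp only [fvec]
  exact single_inner j x

lemma fadj_coord (T : FSpace I →L[ℂ] FSpace I) (x : FSpace I) (j : FBasis I) :
    (ContinuousLinearMap.adjoint T x) j = ⟪T (fvec j), x⟫ := by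
  classical
  simp only [fvec]
  exact adjoint_coord T x j

lemma fapp_coord (T : FSpace I →L[ℂ] FSpace I) (x : FSpace I) (j : FBasis I) :
    (T x) j = ⟪ContinuousLinearMap.adjoint T (fvec j), x⟫ := by
  classical
  simp only [fvec]
  exact apply_coord T x j

end Fside

end MRC
end AuxProof
noncomputable section AuxProof2
namespace MRC

variable {r : ℕ} {L : Type*}

/-- Predecessor of a word: drop the first letter. -/
def predAux (hd : MLetter r L) (tl : List (MLetter r L))
    (hc : List.Chain' (fun a b : MLetter r L => a.1.2 = b.1.1) (hd :: tl)) :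
    MBasis r Set.univ L :=
  match tl, hc with
  | [], _ => Sum.inl hd.1.2
  | t :: ts, hc => Sum.inr ⟨t, ts, Set.mem_univ _, fun _ _ => Set.mem_univ _, hc.tail⟩

def MWord.pred (w : MWord r Set.univ L) : MBasis r Set.univ L :=
  predAux w.head w.tail w.chain

abbrev Idx (r : ℕ) (L : Type*) := Fin r × Fin r × L

def cvInv (i : Idx r L) : MLetter r L := ((i.1, i.2.1), i.2.2)

def chainedL (lst : List (Idx r L)) : Prop :=
  List.Chain' (fun a b => a.2.1 = b.1) lst

def toWord (lst : List (Idx r L)) (h : lst ≠ []) (hc : chainedL lst) :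
    MWord r Set.univ L where
  head := cvInv (lst.head h)
  tail := lst.tail.map cvInv
  headJ := Set.mem_univ _
  tailJ := fun _ _ => Set.mem_univ _
  chain := by
    have he : cvInv (lst.head h) :: lst.tail.map cvInv = lst.map cvInv := by
      rw [← List.map_cons, List.cons_head_tail]
    rw [he]
    exact (List.isChain_map cvInv).mpr hc

@[simp] lemma toWord_head (lst : List (Idx r L)) (h : lst ≠ []) (hc : chainedL lst) :
    (toWord lst h hc).head = cvInv (lst.head h) := rfl

@[simp] lemma toWord_tail (lst : List (Idx r L)) (h : lst ≠ []) (hc : chainedL lst) :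
    (toWord lst h hc).tail = lst.tail.map cvInv := rfl

lemma chainedL_cons {c : Idx r L} {lst : List (Idx r L)} (h : lst ≠ []) :
    chainedL (c :: lst) ↔ c.2.1 = (lst.head h).1 ∧ chainedL lst := by
  unfold chainedL List.Chain'
  rw [List.isChain_cons, List.head?_eq_head h]
  simp

lemma chainedL_singleton (c : Idx r L) : chainedL [c] := List.isChain_singleton _

lemma toWord_cons (c : Idx r L) (lst : List (Idx r L)) (h : lst ≠ [])
    (hc : chainedL lst) (hc' : chainedL (c :: lst))
    (hcc : (cvInv c).1.2 = (toWord lst h hc).head.1.1) :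
    toWord (c :: lst) (by simp) hc' =
      MWord.cons (cvInv c) (Set.mem_univ _) (toWord lst h hc) hcc := by
  apply MWord.ext'
  · rfl
  · show lst.map cvInv = cvInv (lst.head h) :: lst.tail.map cvInv
    rw [← List.map_cons, List.cons_head_tail]

lemma pred_toWord_nil (c : Idx r L) (hc : chainedL [c]) :
    MWord.pred (toWord [c] (by simp) hc) = Sum.inl c.2.1 := rfl

lemma pred_toWord_cons (c t : Idx r L) (ts : List (Idx r L)) (hc : chainedL (c :: t :: ts)) :
    MWord.pred (toWord (c :: t :: ts) (by simp) hc) =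
      Sum.inr (toWord (t :: ts) (by simp) hc.tail) := by
  exact congrArg Sum.inr (MWord.ext' rfl rfl)

/-- Predecessor on the full Fock side. -/
def fpred {I : Type*} (rest : List I) : FBasis I :=
  match rest with
  | [] => Sum.inl ()
  | t :: ts => Sum.inr ⟨t :: ts, by simp⟩

end MRC
end AuxProof2
noncomputable section AuxProof3

open ContinuousLinearMap

local notation "⟪" x ", " y "⟫" => @inner ℂ _ _ x y

namespace MRC

section Mcreate

variable {r : ℕ} {L : Type*} {β : ℝ} {p q : Fin r} {l : L}
  {T : MSpace r Set.univ L →L[ℂ] MSpace r Set.univ L}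

lemma Madj_vac (hT : IsMFCreation β p q l (Set.mem_univ _) T)
    (x : MSpace r Set.univ L) (q' : Fin r) :
    (ContinuousLinearMap.adjoint T x) (Sum.inl q') =
      if q' = q then
        (Real.sqrt β : ℂ) * x (Sum.inr (MWord.single ((p,q),l) (Set.mem_univ _)))
      else 0 := by
  classical
  rw [madj_coord]
  by_cases h : q' = q
  · subst h
    have h1 : T (mvec (Sum.inl q')) =
        (Real.sqrt β : ℂ) • wvec (MWord.single ((p,q'),l) (Set.mem_univ _)) := hT.1
    rw [h1, if_pos rfl]
    simp only [wvec]
    rw [inner_smul_left, mvec_inner, Complex.conj_ofReal]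
  · have h1 : T (mvec (Sum.inl q')) = 0 := hT.2.1 q' h
    rw [h1, inner_zero_left, if_neg h]

lemma Madj_word (hT : IsMFCreation β p q l (Set.mem_univ _) T)
    (x : MSpace r Set.univ L) (w : MWord r Set.univ L) :
    (ContinuousLinearMap.adjoint T x) (Sum.inr w) =
      if h : w.head.1.1 = q then
        (Real.sqrt β : ℂ) *
          x (Sum.inr (MWord.cons ((p,q),l) (Set.mem_univ _) w h.symm))
      else 0 := by
  classical
  rw [madj_coord]
  by_cases h : w.head.1.1 = q
  · have h1 : T (mvec (Sum.inr w)) =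
        (Real.sqrt β : ℂ) • wvec (MWord.cons ((p,q),l) (Set.mem_univ _) w h.symm) :=
      hT.2.2.1 w h
    rw [h1, dif_pos h]
    simp only [wvec]
    rw [inner_smul_left, mvec_inner, Complex.conj_ofReal]
  · have h1 : T (mvec (Sum.inr w)) = 0 := hT.2.2.2 w h
    rw [h1, inner_zero_left, dif_neg h]

lemma Madj_mvec_vac (hT : IsMFCreation β p q l (Set.mem_univ _) T) (q' : Fin r) :
    ContinuousLinearMap.adjoint T (mvec (Sum.inl q') : MSpace r Set.univ L) = 0 := by
  classical
  apply lp.ext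
  funext i
  rcases i with q'' | w'
  · rw [Madj_vac hT]
    split_ifs with h
    · rw [mvec_apply, if_neg (by simp), mul_zero, lp.coeFn_zero, Pi.zero_apply]
    · rw [lp.coeFn_zero, Pi.zero_apply]
  · rw [Madj_word hT]
    split_ifs with h
    · rw [mvec_apply, if_neg (by simp), mul_zero, lp.coeFn_zero, Pi.zero_apply]
    · rw [lp.coeFn_zero, Pi.zero_apply]

lemma Mapp_vac (hT : IsMFCreation β p q l (Set.mem_univ _) T)
    (x : MSpace r Set.univ L) (q' : Fin r) :
    (T x) (Sum.inl q') = 0 := by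
  rw [mapp_coord, Madj_mvec_vac hT, inner_zero_left]

end Mcreate
end MRC
end AuxProof3
noncomputable section AuxProof4

open ContinuousLinearMap

local notation "⟪" x ", " y "⟫" => @inner ℂ _ _ x y

namespace MRC

section Mcreate2

variable {r : ℕ} {L : Type*} {β : ℝ} {p q : Fin r} {l : L}
  {T : MSpace r Set.univ L →L[ℂ] MSpace r Set.univ L}

open Classical in
lemma Madj_mvec_word (hT : IsMFCreation β p q l (Set.mem_univ _) T) (w : MWord r Set.univ L) :
    ContinuousLinearMap.adjoint T (mvec (Sum.inr w) : MSpace r Set.univ L) =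
      if w.head = ((p,q),l) then (Real.sqrt β : ℂ) • mvec (MWord.pred w) else 0 := by
  classical
  obtain ⟨wh, wt, hJ1, hJ2, wc⟩ := w
  apply lp.ext
  funext i
  by_cases hw : wh = ((p,q),l)
  · subst hw
    rw [if_pos rfl]
    cases wt with
    | nil =>
      have hpred : MWord.pred (⟨((p,q),l), [], hJ1, hJ2, wc⟩ : MWord r Set.univ L)
          = Sum.inl q := rfl
      rcases i with q'' | w'
      · by_cases h : q'' = q <;>
          simp [Madj_vac hT, mvec_apply, hpred, h, MWord.single, MWord.eq_iff,
            lp.coeFn_smul, -Complex.coe_smul]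
      · simp [Madj_word hT, mvec_apply, hpred, MWord.cons, MWord.eq_iff, lp.coeFn_smul, -Complex.coe_smul]
    | cons t ts =>
      have hpred : MWord.pred (⟨((p,q),l), t :: ts, hJ1, hJ2, wc⟩ : MWord r Set.univ L)
          = Sum.inr ⟨t, ts, Set.mem_univ _, fun _ _ => Set.mem_univ _, wc.tail⟩ := rfl
      have htq : t.1.1 = q := ((List.isChain_cons_cons.mp wc).1).symm
      rcases i with q'' | w'
      · simp [Madj_vac hT, mvec_apply, hpred, MWord.single, MWord.eq_iff, lp.coeFn_smul, -Complex.coe_smul]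
      · by_cases h : w'.head.1.1 = q
        · simp [Madj_word hT, mvec_apply, hpred, h, MWord.cons, MWord.eq_iff, lp.coeFn_smul, -Complex.coe_smul]
        · have hne : ¬ w' = (⟨t, ts, Set.mem_univ _, fun _ _ => Set.mem_univ _, wc.tail⟩ :
              MWord r Set.univ L) := fun he => h (by rw [he]; exact htq)
          simp [Madj_word hT, mvec_apply, hpred, h, hne, MWord.cons, MWord.eq_iff,
            lp.coeFn_smul, -Complex.coe_smul]
  · rw [if_neg (by simpa using hw)]
    rcases i with q'' | w'
    · simp [Madj_vac hT, mvec_apply, MWord.single, MWord.eq_iff, hw, Ne.symm hw,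
        lp.coeFn_zero]
    · simp [Madj_word hT, mvec_apply, MWord.cons, MWord.eq_iff, hw, Ne.symm hw,
        lp.coeFn_zero]

open Classical in
lemma Mapp_word (hT : IsMFCreation β p q l (Set.mem_univ _) T)
    (x : MSpace r Set.univ L) (w : MWord r Set.univ L) :
    (T x) (Sum.inr w) =
      if w.head = ((p,q),l) then (Real.sqrt β : ℂ) * x (MWord.pred w) else 0 := by
  classical
  rw [mapp_coord, Madj_mvec_word hT]
  by_cases h : w.head = ((p,q),l)
  · rw [if_pos h, if_pos h, inner_smul_left, mvec_inner, Complex.conj_ofReal]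
  · rw [if_neg h, if_neg h, inner_zero_left]

end Mcreate2
end MRC
end AuxProof4
noncomputable section AuxProof5

open ContinuousLinearMap

local notation "⟪" x ", " y "⟫" => @inner ℂ _ _ x y

namespace MRC

section Fcreate

variable {I : Type*} {i : I} {e : FSpace I →L[ℂ] FSpace I}

lemma Fadj_vac (he : IsFreeCreation i e) (x : FSpace I) (u : Unit) :
    (ContinuousLinearMap.adjoint e x) (Sum.inl u) = x (Sum.inr ⟨[i], by simp⟩) := by
  rw [fadj_coord]
  have h1 : e (fvec (Sum.inl u)) = fvec (Sum.inr ⟨[i], by simp⟩) := he.1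
  rw [h1, fvec_inner]

lemma Fadj_word (he : IsFreeCreation i e) (x : FSpace I) (lst : List I) (h : lst ≠ []) :
    (ContinuousLinearMap.adjoint e x) (Sum.inr ⟨lst, h⟩) =
      x (Sum.inr ⟨i :: lst, by simp⟩) := by
  rw [fadj_coord]
  have h1 : e (fvec (Sum.inr ⟨lst, h⟩)) = fvec (Sum.inr ⟨i :: lst, by simp⟩) := he.2 lst h
  rw [h1, fvec_inner]

lemma Fadj_fvec_vac (he : IsFreeCreation i e) (u : Unit) :
    ContinuousLinearMap.adjoint e (fvec (Sum.inl u) : FSpace I) = 0 := by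
  apply lp.ext
  funext j
  rcases j with u' | ⟨lst, h⟩
  · simp [Fadj_vac he, fvec_apply, lp.coeFn_zero]
  · simp [Fadj_word he, fvec_apply, lp.coeFn_zero]

lemma Fapp_vac (he : IsFreeCreation i e) (x : FSpace I) (u : Unit) :
    (e x) (Sum.inl u) = 0 := by
  rw [fapp_coord, Fadj_fvec_vac he, inner_zero_left]

open Classical in
lemma Fadj_fvec_word (he : IsFreeCreation i e) (lst : List I) (h : lst ≠ []) :
    ContinuousLinearMap.adjoint e (fvec (Sum.inr ⟨lst, h⟩) : FSpace I) =
      if lst.head h = i then fvec (fpred lst.tail) else 0 := by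
  classical
  cases lst with
  | nil => exact absurd rfl h
  | cons t rest =>
    apply lp.ext
    funext j
    by_cases hti : t = i
    · subst hti
      cases rest with
      | nil =>
        rcases j with u | ⟨lst', h'⟩
        · simp [Fadj_vac he, fvec_apply, fpred, eq_iff_true_of_subsingleton]
        · simp [Fadj_word he, fvec_apply, fpred, h']
      | cons t' ts =>
        rcases j with u | ⟨lst', h'⟩
        · simp [Fadj_vac he, fvec_apply, fpred]
        · simp [Fadj_word he, fvec_apply, fpred]
    · rcases j with u | ⟨lst', h'⟩
      · simp [Fadj_vac he, fvec_apply, fpred, hti, Ne.symm hti, lp.coeFn_zero]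
      · simp [Fadj_word he, fvec_apply, fpred, hti, Ne.symm hti, lp.coeFn_zero]

open Classical in
lemma Fapp_word (he : IsFreeCreation i e) (x : FSpace I) (lst : List I) (h : lst ≠ []) :
    (e x) (Sum.inr ⟨lst, h⟩) = if lst.head h = i then x (fpred lst.tail) else 0 := by
  classical
  rw [fapp_coord, Fadj_fvec_word he]
  by_cases h' : lst.head h = i
  · rw [if_pos h', if_pos h', fvec_inner]
  · rw [if_neg h', if_neg h', inner_zero_left]

end Fcreate
end MRC
end AuxProof5
noncomputable section AuxProof6

open ContinuousLinearMap

local notation "⟪" x ", " y "⟫" => @inner ℂ _ _ x y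

namespace MRC

section Block

variable {r : ℕ} {I : Type*}

@[simp] lemma tupComp_tupOf (f : Fin r → FSpace I) (k : Fin r) :
    tupComp (tupOf f) k = f k := rfl

lemma fockR_inner (ξ η : FockR r I) : ⟪ξ, η⟫ = ∑ k, ⟪tupComp ξ k, tupComp η k⟫ :=
  PiLp.inner_apply ξ η

lemma block_adjoint (T : FSpace I →L[ℂ] FSpace I) (a b : Fin r)
    (A : FockR r I →L[ℂ] FockR r I)
    (hA : ∀ ξ k, tupComp (A ξ) k = if k = a then T (tupComp ξ b) else 0)
    (ξ : FockR r I) (k : Fin r) :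
    tupComp (ContinuousLinearMap.adjoint A ξ) k =
      if k = b then ContinuousLinearMap.adjoint T (tupComp ξ a) else 0 := by
  classical
  have hv : ContinuousLinearMap.adjoint A ξ =
      tupOf (fun k => if k = b then ContinuousLinearMap.adjoint T (tupComp ξ a) else 0) := by
    apply ext_inner_left ℂ
    intro η
    rw [ContinuousLinearMap.adjoint_inner_right, fockR_inner, fockR_inner]
    have e1 : ∀ k : Fin r, ⟪tupComp (A η) k, tupComp ξ k⟫ =
        if k = a then ⟪T (tupComp η b), tupComp ξ k⟫ else 0 := by
      intro k
      rw [hA]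
      split_ifs <;> simp
    have e2 : ∀ k : Fin r, ⟪tupComp η k,
        tupComp (tupOf (fun k => if k = b then
          ContinuousLinearMap.adjoint T (tupComp ξ a) else 0)) k⟫ =
        if k = b then ⟪tupComp η k, ContinuousLinearMap.adjoint T (tupComp ξ a)⟫ else 0 := by
      intro k
      rw [tupComp_tupOf]
      split_ifs <;> simp
    simp only [e1, e2, Finset.sum_ite_eq', Finset.mem_univ, if_pos]
    rw [ContinuousLinearMap.adjoint_inner_right]
  rw [hv, tupComp_tupOf]

end Block

section CorrDef

variable {r : ℕ} {L : Type*}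

open Classical in
def Corr (x : MSpace r Set.univ L) (y : FockR r (Idx r L)) : Prop :=
  (∀ k : Fin r, (tupComp y k) (Sum.inl ()) = x (Sum.inl k)) ∧
  (∀ (k : Fin r) (lst : List (Idx r L)) (h : lst ≠ []),
    (tupComp y k) (Sum.inr ⟨lst, h⟩) =
      if hg : chainedL lst ∧ (lst.head h).1 = k then
        x (Sum.inr (toWord lst h hg.1))
      else 0)

lemma corr_base (k : Fin r) : Corr (vac k : MSpace r Set.univ L) (fockDelta k) := by
  classical
  constructor
  · intro k'
    have h1 : tupComp (fockDelta k : FockR r (Idx r L)) k' = if k' = k then fvac else 0 := rfl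
    rw [h1]
    by_cases h : k' = k
    · subst h
      simp [fvac, fvec_apply, vac, mvec_apply]
    · simp [h, vac, mvec_apply, lp.coeFn_zero, Ne.symm h]
  · intro k' lst h
    have h1 : tupComp (fockDelta k : FockR r (Idx r L)) k' = if k' = k then fvac else 0 := rfl
    rw [h1]
    split_ifs <;> simp [fvac, fvec_apply, vac, mvec_apply, lp.coeFn_zero]

end CorrDef
end MRC
end AuxProof6
noncomputable section AuxProof7

open ContinuousLinearMap

namespace MRC

section Step

variable {r : ℕ} {L : Type*}

lemma cvInv_eq_iff {i : Idx r L} {a b : Fin r} {l : L} :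
    cvInv i = ((a, b), l) ↔ i = (a, b, l) := by
  obtain ⟨i1, i2, i3⟩ := i
  simp only [cvInv, Prod.mk.injEq]
  tauto

lemma corr_step (a b' : Fin r) (l₁ l₂ : L) (β₁ β₂ : ℝ)
    (T S : MSpace r Set.univ L →L[ℂ] MSpace r Set.univ L)
    (hT : IsMFCreation β₁ a b' l₁ (Set.mem_univ _) T)
    (hS : IsMFCreation β₂ b' a l₂ (Set.mem_univ _) S)
    (e₁ e₂ : FSpace (Idx r L) →L[ℂ] FSpace (Idx r L))
    (he₁ : IsFreeCreation (a, b', l₁) e₁)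
    (he₂ : IsFreeCreation (b', a, l₂) e₂)
    (Z : FockR r (Idx r L) →L[ℂ] FockR r (Idx r L))
    (hZ : ∀ ξ k, tupComp (Z ξ) k = if k = a then
      (((Real.sqrt β₁ : ℂ) • e₁ + (Real.sqrt β₂ : ℂ) • ContinuousLinearMap.adjoint e₂)
        (tupComp ξ b')) else 0)
    (x : MSpace r Set.univ L) (y : FockR r (Idx r L)) (hxy : Corr x y) :
    Corr ((T + ContinuousLinearMap.adjoint S) x) (Z y) := by
  classical
  obtain ⟨h1, h2⟩ := hxy
  constructor
  · -- vacuum coordinates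
    intro k
    rw [hZ y k]
    simp only [ContinuousLinearMap.add_apply, lp.coeFn_add, Pi.add_apply,
      Mapp_vac hT, Madj_vac hS, zero_add]
    by_cases hk : k = a
    · subst hk
      rw [if_pos rfl, if_pos rfl]
      simp only [ContinuousLinearMap.add_apply, ContinuousLinearMap.smul_apply,
        lp.coeFn_add, Pi.add_apply, lp.coeFn_smul, Pi.smul_apply, smul_eq_mul,
        Fapp_vac he₁, Fadj_vac he₂, mul_zero, zero_add]
      rw [h2 b' [(b', k, l₂)] (by simp)]
      rw [dif_pos ⟨chainedL_singleton _, rfl⟩]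
      have hw : toWord [(b', k, l₂)] (by simp) (chainedL_singleton _) =
          MWord.single ((b', k), l₂) (Set.mem_univ _) := rfl
      rw [hw]
    · rw [if_neg hk, if_neg hk, lp.coeFn_zero, Pi.zero_apply]
  · -- word coordinates
    intro k lst h
    rw [hZ y k]
    cases lst with
    | nil => exact absurd rfl h
    | cons c rest =>
      by_cases hk : k = a
      · subst hk
        rw [if_pos rfl]
        simp only [ContinuousLinearMap.add_apply, ContinuousLinearMap.smul_apply,
          lp.coeFn_add, Pi.add_apply, lp.coeFn_smul, Pi.smul_apply, smul_eq_mul,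
          Fapp_word he₁, Fadj_word he₂, List.head_cons, List.tail_cons]
        by_cases hgood : chainedL (c :: rest) ∧ c.1 = k
        · rw [dif_pos hgood]
          have hc1a : c.1 = k := hgood.2
          -- second (annihilation) term on the F side
          have hBcond : chainedL ((b', k, l₂) :: c :: rest) ∧
              ((List.head ((b', k, l₂) :: c :: rest) (by simp))).1 = b' := by
            refine ⟨?_, rfl⟩
            rw [chainedL_cons (h := h)]
            exact ⟨by simpa using hc1a.symm, hgood.1⟩
          rw [h2 b' ((b', k, l₂) :: c :: rest) (by simp), dif_pos hBcond]
          have hWcons : toWord ((b', k, l₂) :: c :: rest) (by simp) hBcond.1 =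
              MWord.cons ((b', k), l₂) (Set.mem_univ _)
                (toWord (c :: rest) h hgood.1)
                (by simpa [cvInv] using hc1a.symm) :=
            toWord_cons _ _ _ _ _ _
          rw [hWcons]
          -- the M side
          simp only [ContinuousLinearMap.add_apply, lp.coeFn_add, Pi.add_apply,
            Mapp_word hT, Madj_word hS, toWord_head, List.head_cons]
          simp only [show (cvInv c).1.1 = k by
            simpa [cvInv] using hc1a, eq_self_iff_true, ↓reduceDIte]
          congr 1
          · -- creation terms agree
            by_cases hc1 : c = (k, b', l₁)
            · subst hc1
              simp only [eq_self_iff_true, if_true,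
                (show cvInv ((k, b', l₁) : Idx r L) = (((k, b'), l₁) : MLetter r L)
                  from rfl)]
              congr 1
              cases rest with
              | nil =>
                rw [pred_toWord_nil]
                simp only [fpred]
                exact h1 b'
              | cons t ts =>
                rw [pred_toWord_cons]
                simp only [fpred]
                have hcond : chainedL (t :: ts) ∧ ((t :: ts).head (by simp)).1 = b' := by
                  have := (List.isChain_cons_cons.mp hgood.1)
                  exact ⟨this.2, by simpa using this.1.symm⟩
                rw [h2 b' (t :: ts) (by simp), dif_pos hcond]
            · simp only [hc1, if_false]
              simp only [(show ¬ cvInv c = (((k, b'), l₁) : MLetter r L) by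
                rw [cvInv_eq_iff]; exact hc1), if_false]
              rw [mul_zero]
        · rw [dif_neg hgood]
          have hnotB : ¬ (chainedL ((b', k, l₂) :: c :: rest) ∧
              ((List.head ((b', k, l₂) :: c :: rest) (by simp))).1 = b') := by
            intro hB
            apply hgood
            have := (chainedL_cons (h := h)).mp hB.1
            exact ⟨this.2, by simpa using this.1.symm⟩
          rw [h2 b' ((b', k, l₂) :: c :: rest) (by simp), dif_neg hnotB, mul_zero]
          by_cases hc1 : c = (k, b', l₁)
          · subst hc1
            simp only [eq_self_iff_true, if_true]
            cases rest with
            | nil =>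
              exact absurd ⟨chainedL_singleton _, by simp⟩ hgood
            | cons t ts =>
              simp only [fpred]
              have hnotA : ¬ (chainedL (t :: ts) ∧ ((t :: ts).head (by simp)).1 = b') := by
                intro hA
                apply hgood
                refine ⟨?_, by simp⟩
                rw [chainedL_cons (h := by simp)]
                exact ⟨by simpa using hA.2.symm, hA.1⟩
              rw [h2 b' (t :: ts) (by simp), dif_neg hnotA]
              simp
          · simp only [hc1, if_false]
            simp
      · rw [if_neg hk]
        split_ifs with hgood
        · simp only [ContinuousLinearMap.add_apply, lp.coeFn_add, Pi.add_apply,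
            Mapp_word hT, Madj_word hS, toWord_head]
          have hc1k : c.1 = k := by simpa using hgood.2
          simp only [(show ¬ cvInv (List.head (c :: rest) h) = ((a, b'), l₁) by
            rw [cvInv_eq_iff]
            intro hce
            have hc : c = (a, b', l₁) := by simpa using hce
            exact hk (by rw [← hc1k, hc])),
            (show ¬ (cvInv (List.head (c :: rest) h)).1.1 = a by
              simpa [cvInv, List.head_cons, hc1k] using hk), ↓reduceIte, ↓reduceDIte]
          simp
        · rfl

end Step
end MRC
end AuxProof7

/-- the joint *-distributions of the matricial `R`-circular operators
`ζ_{p,q}(u) = ℘_{p,q}(u′) + ℘_{q,p}(u″)*` in the states `Ψ_k` agree with those of the operators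
`G_{p,q}(u) = g(p,q,u) ⊗ e(p,q)` in the states `Φ_k`, where
`g(p,q,u) = √b_{p,q}(u)·ℓ(p,q,u′) + √b_{q,p}(u)·ℓ(q,p,u″)*` on the full Fock space.
Here the label set is `L = U ⊕ U`, `u′ = Sum.inl u`, `u″ = Sum.inr u`. -/
theorem matricialRCircular_matrix_realization
    (r : ℕ) (hr : 1 ≤ r) (U : Type) [Finite U]
    (b : Fin r → Fin r → U → ℝ) (hb : ∀ p q u, 0 ≤ b p q u)
    (C : (p q : Fin r) → (U ⊕ U) → (MSpace r Set.univ (U ⊕ U) →L[ℂ] MSpace r Set.univ (U ⊕ U)))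
    (hC : ∀ p q l, IsMFCreation (b p q (Sum.elim id id l)) p q l (Set.mem_univ _) (C p q l))
    (ell : (Fin r × Fin r × (U ⊕ U)) →
      (FSpace (Fin r × Fin r × (U ⊕ U)) →L[ℂ] FSpace (Fin r × Fin r × (U ⊕ U))))
    (hell : ∀ i, IsFreeCreation i (ell i))
    (Gop : (p q : Fin r) → U →
      (FockR r (Fin r × Fin r × (U ⊕ U)) →L[ℂ] FockR r (Fin r × Fin r × (U ⊕ U))))
    (hGop : ∀ p q u ξ k,
      tupComp (Gop p q u ξ) k = if k = p then
        (((Real.sqrt (b p q u) : ℂ) • ell (p, q, Sum.inl u)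
          + (Real.sqrt (b q p u) : ℂ) • ContinuousLinearMap.adjoint (ell (q, p, Sum.inr u)))
        (tupComp ξ q)) else 0) :
    ∀ (k : Fin r) (m : ℕ), 1 ≤ m → ∀ (pp qq : Fin m → Fin r) (uu : Fin m → U)
      (ε : Fin m → Bool),
      PsiM k (List.ofFn (fun j => sOp (ε j)
        (C (pp j) (qq j) (Sum.inl (uu j))
          + ContinuousLinearMap.adjoint (C (qq j) (pp j) (Sum.inr (uu j)))))).prod
      = PhiR k (List.ofFn (fun j => sOp (ε j) (Gop (pp j) (qq j) (uu j)))).prod := by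
  classical
  intro k m _ pp qq uu ε
  -- the one-step correspondence
  have hstep : ∀ (p q : Fin r) (u : U) (ε' : Bool)
      (x : MSpace r Set.univ (U ⊕ U)) (y : FockR r (MRC.Idx r (U ⊕ U))),
      MRC.Corr x y →
      MRC.Corr (sOp ε' (C p q (Sum.inl u)
          + ContinuousLinearMap.adjoint (C q p (Sum.inr u))) x)
        (sOp ε' (Gop p q u) y) := by
    intro p q u ε' x y hxy
    cases ε' with
    | true =>
      exact MRC.corr_step p q (Sum.inl u) (Sum.inr u) (b p q u) (b q p u)
        (C p q (Sum.inl u)) (C q p (Sum.inr u))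
        (hC p q (Sum.inl u)) (hC q p (Sum.inr u))
        (ell (p, q, Sum.inl u)) (ell (q, p, Sum.inr u))
        (hell _) (hell _) (Gop p q u) (hGop p q u) x y hxy
    | false =>
      have hadj : sOp false (C p q (Sum.inl u)
          + ContinuousLinearMap.adjoint (C q p (Sum.inr u)))
          = C q p (Sum.inr u) + ContinuousLinearMap.adjoint (C p q (Sum.inl u)) := by
        show ContinuousLinearMap.adjoint (C p q (Sum.inl u)
          + ContinuousLinearMap.adjoint (C q p (Sum.inr u))) = _
        rw [map_add, ContinuousLinearMap.adjoint_adjoint, add_comm]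
      rw [hadj]
      have hg : ContinuousLinearMap.adjoint
          ((Real.sqrt (b p q u) : ℂ) • ell (p, q, Sum.inl u)
            + (Real.sqrt (b q p u) : ℂ) • ContinuousLinearMap.adjoint (ell (q, p, Sum.inr u)))
          = (Real.sqrt (b q p u) : ℂ) • ell (q, p, Sum.inr u)
            + (Real.sqrt (b p q u) : ℂ)
              • ContinuousLinearMap.adjoint (ell (p, q, Sum.inl u)) := by
        rw [map_add, map_smulₛₗ, map_smulₛₗ, ContinuousLinearMap.adjoint_adjoint,
          Complex.conj_ofReal, Complex.conj_ofReal, add_comm]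
      have hZ : ∀ (ξ : FockR r (MRC.Idx r (U ⊕ U))) (k' : Fin r),
          tupComp (ContinuousLinearMap.adjoint (Gop p q u) ξ) k' =
          if k' = q then
            (((Real.sqrt (b q p u) : ℂ) • ell (q, p, Sum.inr u)
              + (Real.sqrt (b p q u) : ℂ)
                • ContinuousLinearMap.adjoint (ell (p, q, Sum.inl u)))
              (tupComp ξ p)) else 0 := by
        intro ξ k'
        rw [MRC.block_adjoint _ p q (Gop p q u) (hGop p q u) ξ k', hg]
      exact MRC.corr_step q p (Sum.inr u) (Sum.inl u) (b q p u) (b p q u)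
        (C q p (Sum.inr u)) (C p q (Sum.inl u))
        (hC q p (Sum.inr u)) (hC p q (Sum.inl u))
        (ell (q, p, Sum.inr u)) (ell (p, q, Sum.inl u))
        (hell _) (hell _) (ContinuousLinearMap.adjoint (Gop p q u)) hZ x y hxy
  -- correspondence for products
  have hprod : ∀ (js : List ((Fin r × Fin r × U) × Bool)),
      MRC.Corr
        ((js.map (fun z => sOp z.2 (C z.1.1 z.1.2.1 (Sum.inl z.1.2.2)
            + ContinuousLinearMap.adjoint (C z.1.2.1 z.1.1 (Sum.inr z.1.2.2))))).prod (vac k))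
        ((js.map (fun z => sOp z.2 (Gop z.1.1 z.1.2.1 z.1.2.2))).prod (fockDelta k)) := by
    intro js
    induction js with
    | nil =>
      simpa using MRC.corr_base (L := U ⊕ U) k
    | cons z js ih =>
      simp only [List.map_cons, List.prod_cons, ContinuousLinearMap.mul_apply]
      exact hstep z.1.1 z.1.2.1 z.1.2.2 z.2 _ _ ih
  have hcorr := hprod (List.ofFn (fun j => ((pp j, qq j, uu j), ε j)))
  rw [List.map_ofFn, List.map_ofFn] at hcorr
  have hM : (List.ofFn fun j => ((fun z : (Fin r × Fin r × U) × Bool =>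
        sOp z.2 (C z.1.1 z.1.2.1 (Sum.inl z.1.2.2)
          + ContinuousLinearMap.adjoint (C z.1.2.1 z.1.1 (Sum.inr z.1.2.2)))) ∘
        fun j => ((pp j, qq j, uu j), ε j)) j)
      = List.ofFn (fun j => sOp (ε j)
        (C (pp j) (qq j) (Sum.inl (uu j))
          + ContinuousLinearMap.adjoint (C (qq j) (pp j) (Sum.inr (uu j))))) := rfl
  have hG : (List.ofFn fun j => ((fun z : (Fin r × Fin r × U) × Bool =>
        sOp z.2 (Gop z.1.1 z.1.2.1 z.1.2.2)) ∘ fun j => ((pp j, qq j, uu j), ε j)) j)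
      = List.ofFn (fun j => sOp (ε j) (Gop (pp j) (qq j) (uu j))) := rfl
  rw [hM, hG] at hcorr
  -- evaluate the two states
  have hPsi : PsiM k (List.ofFn (fun j => sOp (ε j)
        (C (pp j) (qq j) (Sum.inl (uu j))
          + ContinuousLinearMap.adjoint (C (qq j) (pp j) (Sum.inr (uu j)))))).prod
      = ((List.ofFn (fun j => sOp (ε j)
        (C (pp j) (qq j) (Sum.inl (uu j))
          + ContinuousLinearMap.adjoint (C (qq j) (pp j) (Sum.inr (uu j)))))).prod (vac k))
        (Sum.inl k) := by
    show @inner ℂ _ _ (vac k : MSpace r Set.univ (U ⊕ U)) _ = _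
    simp only [vac]
    rw [MRC.mvec_inner]
  have hPhi : PhiR k (List.ofFn (fun j => sOp (ε j) (Gop (pp j) (qq j) (uu j)))).prod
      = (tupComp ((List.ofFn (fun j => sOp (ε j) (Gop (pp j) (qq j) (uu j)))).prod
          (fockDelta k)) k) (Sum.inl ()) := by
    show @inner ℂ _ _ (fockDelta k : FockR r (MRC.Idx r (U ⊕ U))) _ = _
    rw [MRC.fockR_inner]
    have he : ∀ j : Fin r, @inner ℂ _ _
        (tupComp (fockDelta k : FockR r (MRC.Idx r (U ⊕ U))) j)
        (tupComp ((List.ofFn (fun j => sOp (ε j) (Gop (pp j) (qq j) (uu j)))).prod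
          (fockDelta k)) j)
        = if j = k then @inner ℂ _ _ (fvac : FSpace (MRC.Idx r (U ⊕ U)))
            (tupComp ((List.ofFn (fun j => sOp (ε j) (Gop (pp j) (qq j) (uu j)))).prod
              (fockDelta k)) j) else 0 := by
      intro j
      have hd : tupComp (fockDelta k : FockR r (MRC.Idx r (U ⊕ U))) j
          = if j = k then fvac else 0 := rfl
      rw [hd]
      split_ifs with hj
      · rfl
      · exact inner_zero_left _
    simp only [he, Finset.sum_ite_eq', Finset.mem_univ, if_pos]
    simp only [fvac]
    rw [MRC.fvec_inner]
  rw [hPsi, hPhi, ← hcorr.1 k]
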